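/- arXiv:2603.13807 — 2 statements merged into one kernel-verified Lean document; each statement's English description precedes it below -/
import Mathlib

section
/- Let θ* be the c.i.i.d. signal structure with single-expert joint law Pr[ω=0, S_i=0] = 3/8, Pr[ω=0, S_i=1] = 3/8, Pr[ω=1, S_i=0] = 0, Pr[ω=1, S_i=1] = 1/4, and let λ* = 5/2, so that under rep(θ*, ψ_{λ*}) each expert independently reports 1 with probability q_0 = 1/(2+2e^5) + 1/(2+2e) when ω = 0 and with probability q_1 = 1/(1+e) when ω = 1. Then for every n > 2, majority voting on the bounded-rational reports beats the best aggregation of fully rational reports: U(f^maj, rep(θ*, ψ_{λ*})) > max over aggregators f of U(f, rep(θ*, ψ_∞)) = 1/2. -/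
open Real Finset

open Real Finset

/-- Quantal response function `ψ_λ(p) = 1/(1 + exp(2λ(1−2p)))`. -/
noncomputable def psi (lam p : ℝ) : ℝ := 1 / (1 + Real.exp (2 * lam * (1 - 2 * p)))

/-- A c.i.i.d. signal structure with finite signal set `Fin k`: prior `prior = Pr[ω = 1]`
and conditional signal laws `nu0 s = Pr[S_i = s | ω = 0]`, `nu1 s = Pr[S_i = s | ω = 1]`,
common to all experts, with signals i.i.d. conditionally on `ω`. -/
structure SignalStructure where
  k : ℕ
  prior : ℝ
  nu0 : Fin k → ℝ
  nu1 : Fin k → ℝ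
  prior_nonneg : 0 ≤ prior
  prior_le_one : prior ≤ 1
  nu0_nonneg : ∀ s, 0 ≤ nu0 s
  nu1_nonneg : ∀ s, 0 ≤ nu1 s
  nu0_sum : ∑ s, nu0 s = 1
  nu1_sum : ∑ s, nu1 s = 1

/-- Posterior `Pr_θ[ω = 1 | S_i = s]` (set to `0` on null signals). -/
noncomputable def posterior (θ : SignalStructure) (s : Fin θ.k) : ℝ :=
  if θ.prior * θ.nu1 s + (1 - θ.prior) * θ.nu0 s = 0 then 0
  else θ.prior * θ.nu1 s / (θ.prior * θ.nu1 s + (1 - θ.prior) * θ.nu0 s)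

/-- `Pr[X_i = 1 | ω = w]` when each expert reports `1` with probability
`ψ(Pr_θ[ω = 1 | S_i = s])` given its signal `s`. -/
noncomputable def reportProb (θ : SignalStructure) (ψ : ℝ → ℝ) (w : Bool) : ℝ :=
  ∑ s, (if w then θ.nu1 s else θ.nu0 s) * ψ (posterior θ s)

/-- The joint law of `(ω, X_1, …, X_n)` in which `Pr[ω = 1] = μ` and, conditionally
on `ω`, the binary reports `X_i` are i.i.d. with `Pr[X_i = 1 | ω = 1] = q1` and
`Pr[X_i = 1 | ω = 0] = q0`. -/
noncomputable def repOf (n : ℕ) (μ q0 q1 : ℝ) : Bool → (Fin n → Bool) → ℝ :=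
  fun w x =>
    (if w then μ else 1 - μ) *
      ∏ i, (if x i then (if w then q1 else q0) else 1 - (if w then q1 else q0))

/-- The report structure `rep(θ, ψ)`: the joint law of `(ω, X_1, …, X_n)` induced
by the signal structure `θ` and the response function `ψ`. -/
noncomputable def rep (n : ℕ) (θ : SignalStructure) (ψ : ℝ → ℝ) :
    Bool → (Fin n → Bool) → ℝ :=
  repOf n θ.prior (reportProb θ ψ false) (reportProb θ ψ true)

/-- The set `Θ̂^ciid_λ` of report structures induced by all c.i.i.d. signal structures. -/
noncomputable def repSet (n : ℕ) (lam : ℝ) : Set (Bool → (Fin n → Bool) → ℝ) :=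
  {r | ∃ θ : SignalStructure, rep n θ (psi lam) = r}

/-- `Pr[ω = w, X = x]` where `X = Σ_i X_i` counts the experts reporting `1`. -/
noncomputable def jointProb (n : ℕ) (r : Bool → (Fin n → Bool) → ℝ) (w : Bool) (x : ℕ) : ℝ :=
  ∑ v : Fin n → Bool,
    if (Finset.univ.filter (fun i => v i = true)).card = x then r w v else 0

/-- Utility `U(f, θ̂) = Σ_x Pr[X=x]·(2Pr[ω=1|X=x]−1)·(2f(x)−1)
             = Σ_x (2f(x)−1)·(Pr[ω=1,X=x] − Pr[ω=0,X=x])`. -/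
noncomputable def U (n : ℕ) (f : ℕ → ℝ) (r : Bool → (Fin n → Bool) → ℝ) : ℝ :=
  ∑ x ∈ Finset.range (n + 1),
    (2 * f x - 1) * (jointProb n r true x - jointProb n r false x)

/-- The omniscient aggregator `opt_θ̂`: sends `x` to `1`, `1/2`, `0` according as
`Pr[ω=1 | X=x]` is `>`, `=`, `<` `1/2`. -/
noncomputable def optAgg (n : ℕ) (r : Bool → (Fin n → Bool) → ℝ) : ℕ → ℝ := fun x =>
  if jointProb n r false x < jointProb n r true x then 1
  else if jointProb n r true x = jointProb n r false x then 1 / 2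
  else 0

/-- Regret `R(f, θ̂) = U(opt_θ̂, θ̂) − U(f, θ̂)`. -/
noncomputable def regret (n : ℕ) (f : ℕ → ℝ) (r : Bool → (Fin n → Bool) → ℝ) : ℝ :=
  U n (optAgg n r) r - U n f r

/-- An aggregator `f : {0,…,n} → [0,1]`. -/
def IsAggregator (f : ℕ → ℝ) : Prop := ∀ x, 0 ≤ f x ∧ f x ≤ 1

/-- Majority voting `f^maj`. -/
noncomputable def fmaj (n : ℕ) : ℕ → ℝ := fun x =>
  if 2 * x < n then 0 else if 2 * x = n then 1 / 2 else 1

/-- Worst-case regret of aggregator `f` over all c.i.i.d.-induced report structures. -/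
noncomputable def worstRegret (n : ℕ) (lam : ℝ) (f : ℕ → ℝ) : ℝ :=
  sSup {t : ℝ | ∃ r ∈ repSet n lam, t = regret n f r}

/-- The fully rational (perfectly rational, `λ → ∞`) response function. -/
noncomputable def psiInf (p : ℝ) : ℝ :=
  if 1 / 2 < p then 1 else if p = 1 / 2 then 1 / 2 else 0

/-- The signal structure `θ*` with single-expert joint law
`Pr[ω=0, S_i=0] = 3/8`, `Pr[ω=0, S_i=1] = 3/8`, `Pr[ω=1, S_i=0] = 0`, `Pr[ω=1, S_i=1] = 1/4`
(i.e. prior `μ = 1/4`, `ν_0 = (1/2, 1/2)`, `ν_1 = (0, 1)`). -/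
noncomputable def thetaStar : SignalStructure where
  k := 2
  prior := 1 / 4
  nu0 := ![1 / 2, 1 / 2]
  nu1 := ![0, 1]
  prior_nonneg := by norm_num
  prior_le_one := by norm_num
  nu0_nonneg := by intro s; fin_cases s <;> norm_num
  nu1_nonneg := by intro s; fin_cases s <;> norm_num
  nu0_sum := by norm_num [Fin.sum_univ_two]
  nu1_sum := by norm_num [Fin.sum_univ_two]
lemma count_boolfun (n x : ℕ) :
    ((Finset.univ : Finset (Fin n → Bool)).filter
      (fun v => (Finset.univ.filter (fun i => v i = true)).card = x)).card = n.choose x := by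
  classical
  have h : n.choose x = (Finset.powersetCard x (Finset.univ : Finset (Fin n))).card := by
    rw [Finset.card_powersetCard, Finset.card_univ, Fintype.card_fin]
  rw [h]
  refine Finset.card_bij' (fun v _ => Finset.univ.filter (fun i => v i = true))
    (fun A _ => fun i => decide (i ∈ A)) ?_ ?_ ?_ ?_
  · intro v hv
    simp only [Finset.mem_filter] at hv
    simp [Finset.mem_powersetCard, hv.2]
  · intro A hA
    simp only [Finset.mem_powersetCard] at hA
    simp only [Finset.mem_filter, Finset.mem_univ, true_and]
    rw [← hA.2]
    congr 1
    ext i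
    simp
  · intro v hv
    funext i
    simp
  · intro A hA
    ext i
    simp

lemma bern_sum (n x : ℕ) (p : ℝ) :
    (∑ v : Fin n → Bool,
        if (Finset.univ.filter (fun i => v i = true)).card = x then
          ∏ i, (if v i then p else 1 - p) else 0)
      = (n.choose x : ℝ) * p ^ x * (1 - p) ^ (n - x) := by
  classical
  rw [← Finset.sum_filter]
  have h : ∀ v ∈ (Finset.univ.filter
      (fun v : Fin n → Bool => (Finset.univ.filter (fun i => v i = true)).card = x)),
      (∏ i, (if v i then p else 1 - p)) = p ^ x * (1 - p) ^ (n - x) := by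
    intro v hv
    simp only [Finset.mem_filter] at hv
    rw [Finset.prod_ite, Finset.prod_const, Finset.prod_const, hv.2]
    congr 1
    rw [Finset.filter_not, Finset.card_sdiff_of_subset (Finset.filter_subset _ _),
      Finset.card_univ, Fintype.card_fin, hv.2]
  rw [Finset.sum_congr rfl h, Finset.sum_const, count_boolfun, nsmul_eq_mul]
  ring

lemma jointProb_repOf (n : ℕ) (μ q0 q1 : ℝ) (w : Bool) (x : ℕ) :
    jointProb n (repOf n μ q0 q1) w x
      = (if w then μ else 1 - μ) *
        ((n.choose x : ℝ) * (if w then q1 else q0) ^ x *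
          (1 - (if w then q1 else q0)) ^ (n - x)) := by
  unfold jointProb repOf
  rw [← bern_sum n x (if w then q1 else q0), Finset.mul_sum]
  refine Finset.sum_congr rfl fun v _ => ?_
  rw [mul_ite, mul_zero]

lemma jointProb_repOf_true (n : ℕ) (μ q0 q1 : ℝ) (x : ℕ) :
    jointProb n (repOf n μ q0 q1) true x
      = μ * ((n.choose x : ℝ) * q1 ^ x * (1 - q1) ^ (n - x)) := by
  rw [jointProb_repOf]; simp

lemma jointProb_repOf_false (n : ℕ) (μ q0 q1 : ℝ) (x : ℕ) :
    jointProb n (repOf n μ q0 q1) false x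
      = (1 - μ) * ((n.choose x : ℝ) * q0 ^ x * (1 - q0) ^ (n - x)) := by
  rw [jointProb_repOf]; simp

lemma binom_sum_one (n : ℕ) (q : ℝ) :
    ∑ x ∈ Finset.range (n + 1), (n.choose x : ℝ) * q ^ x * (1 - q) ^ (n - x) = 1 := by
  have h := add_pow q (1 - q) n
  have h1 : (q + (1 - q)) = 1 := by ring
  rw [h1, one_pow] at h
  have h2 : ∑ x ∈ Finset.range (n+1), (n.choose x : ℝ) * q ^ x * (1 - q) ^ (n - x)
      = ∑ m ∈ Finset.range (n+1), q ^ m * (1 - q) ^ (n - m) * (n.choose m : ℝ) :=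
    Finset.sum_congr rfl fun x _ => by ring
  rw [h2, ← h]
lemma rp_false : reportProb thetaStar (psi (5 / 2)) false
    = 1 / (2 + 2 * Real.exp 5) + 1 / (2 + 2 * Real.exp 1) := by
  have h5 : (0:ℝ) < 1 + Real.exp 5 := by positivity
  have h1 : (0:ℝ) < 1 + Real.exp 1 := by positivity
  rw [reportProb]; erw [Fin.sum_univ_two]
  simp only [reportProb, thetaStar, posterior, psi, Fin.sum_univ_two,
    Matrix.cons_val_zero, Matrix.cons_val_one, Matrix.head_cons]
  norm_num
  field_simp

lemma rp_true : reportProb thetaStar (psi (5 / 2)) true = 1 / (1 + Real.exp 1) := by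
  have h1 : (0:ℝ) < 1 + Real.exp 1 := by positivity
  rw [reportProb]; erw [Fin.sum_univ_two]
  simp only [reportProb, thetaStar, posterior, psi, Fin.sum_univ_two,
    Matrix.cons_val_zero, Matrix.cons_val_one, Matrix.head_cons]
  norm_num

lemma rpInf_false : reportProb thetaStar psiInf false = 0 := by
  rw [reportProb]; erw [Fin.sum_univ_two]
  simp only [reportProb, thetaStar, posterior, psiInf, Fin.sum_univ_two,
    Matrix.cons_val_zero, Matrix.cons_val_one, Matrix.head_cons]
  norm_num

lemma rpInf_true : reportProb thetaStar psiInf true = 0 := by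
  rw [reportProb]; erw [Fin.sum_univ_two]
  simp only [reportProb, thetaStar, posterior, psiInf, Fin.sum_univ_two,
    Matrix.cons_val_zero, Matrix.cons_val_one, Matrix.head_cons]
  norm_num
lemma exp5_bounds : (148.41:ℝ) < Real.exp 5 ∧ Real.exp 5 < 148.42 := by
  have h : Real.exp 5 = Real.exp 1 ^ 5 := by
    rw [← Real.exp_nat_mul]; norm_num
  have hl := Real.exp_one_gt_d9
  have hu := Real.exp_one_lt_d9
  constructor
  · rw [h]
    calc (148.41:ℝ) < 2.7182818283 ^ 5 := by norm_num
      _ < Real.exp 1 ^ 5 := by gcongr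
  · rw [h]
    calc Real.exp 1 ^ 5 < 2.7182818286 ^ 5 := by gcongr
      _ < 148.42 := by norm_num

lemma q_bounds :
    (0.13781:ℝ) < 1 / (2 + 2 * Real.exp 5) + 1 / (2 + 2 * Real.exp 1) ∧
    (1 / (2 + 2 * Real.exp 5) + 1 / (2 + 2 * Real.exp 1) : ℝ) < 0.13782 ∧
    (0.26894:ℝ) < 1 / (1 + Real.exp 1) ∧ (1 / (1 + Real.exp 1) : ℝ) < 0.26895 := by
  obtain ⟨h5l, h5u⟩ := exp5_bounds
  have hl := Real.exp_one_gt_d9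
  have hu := Real.exp_one_lt_d9
  have he : (0:ℝ) < Real.exp 1 := Real.exp_pos 1
  have h5 : (0:ℝ) < Real.exp 5 := Real.exp_pos 5
  refine ⟨?_, ?_, ?_, ?_⟩
  · have a1 : (1:ℝ)/298.84 ≤ 1 / (2 + 2 * Real.exp 5) := by gcongr <;> nlinarith
    have a2 : (1:ℝ)/7.4365636572 ≤ 1 / (2 + 2 * Real.exp 1) := by gcongr <;> nlinarith
    nlinarith
  · have a1 : 1 / (2 + 2 * Real.exp 5) ≤ (1:ℝ)/298.82 := by gcongr <;> nlinarith
    have a2 : 1 / (2 + 2 * Real.exp 1) ≤ (1:ℝ)/7.4365636566 := by gcongr <;> nlinarith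
    nlinarith
  · have a2 : (1:ℝ)/3.7182818286 ≤ 1 / (1 + Real.exp 1) := by gcongr <;> nlinarith
    nlinarith
  · have a2 : 1 / (1 + Real.exp 1) ≤ (1:ℝ)/3.7182818283 := by gcongr <;> nlinarith
    nlinarith
section ineqs
variable {q0 q1 : ℝ} (h0l : (0.13781:ℝ) < q0) (h0u : q0 < 0.13782)
  (h1l : (0.26894:ℝ) < q1) (h1u : q1 < 0.26895)

include h0l h0u h1l h1u

lemma term_pos (n x : ℕ) (hn : 3 ≤ n) (hx : n < 2 * x) (hxn : x ≤ n) :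
    3 * (q0 ^ x * (1 - q0) ^ (n - x)) < q1 ^ x * (1 - q1) ^ (n - x) := by
  have hq0 : (0:ℝ) < q0 := by linarith
  have hq01 : q0 ≤ q1 := by linarith
  have hb0 : (0:ℝ) < 1 - q0 := by linarith
  have hb1 : (0:ℝ) < 1 - q1 := by linarith
  set A := q1 * (1 - q1) with hA
  set B := q0 * (1 - q0) with hB
  have hApos : (0:ℝ) < A := by positivity
  have hBpos : (0:ℝ) < B := by positivity
  have hBA : B ≤ A := by nlinarith
  have hsq : 3 * q0 ^ 2 < q1 ^ 2 := by nlinarith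
  have hcube : 3 * (B * q0) < A * q1 := by nlinarith
  set k := n - x with hk
  have hxkd : x = k + (x - k) := by omega
  set d := x - k with hd
  have hd1 : 1 ≤ d := by omega
  have hprod : ∀ (a b : ℝ), 0 < b → a ^ (k + d) * b ^ k = (a*b) ^ k * a ^ d := by
    intro a b hb; rw [pow_add, mul_pow]; ring
  rw [hxkd, hprod q0 (1-q0) hb0, hprod q1 (1-q1) hb1]
  rcases Nat.lt_or_ge d 2 with hd2 | hd2
  · -- d = 1, so k ≥ 1 since n = 2k + d ≥ 3
    have hdeq : d = 1 := by omega
    have hk1 : 1 ≤ k := by omega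
    have hBk : B ^ k = B ^ (k-1) * B := by
      rw [← pow_succ]; congr 1; omega
    have hAk : A ^ k = A ^ (k-1) * A := by
      rw [← pow_succ]; congr 1; omega
    rw [hdeq, hBk, hAk, pow_one, pow_one]
    have hpk : (0:ℝ) < B ^ (k-1) := by positivity
    calc 3 * (B ^ (k-1) * B * q0) = (3 * (B * q0)) * B ^ (k-1) := by ring
      _ < (A * q1) * B ^ (k-1) := by exact mul_lt_mul_of_pos_right hcube hpk
      _ ≤ (A * q1) * A ^ (k-1) := by gcongr
      _ = A ^ (k-1) * A * q1 := by ring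
  · have hdeq : d = (d - 2) + 2 := by omega
    rw [hdeq, pow_add, pow_add]
    have hpk : (0:ℝ) < B ^ k * q0 ^ (d-2) := by positivity
    calc 3 * (B ^ k * (q0 ^ (d-2) * q0 ^ 2)) = (3 * q0 ^ 2) * (B ^ k * q0 ^ (d-2)) := by ring
      _ < q1 ^ 2 * (B ^ k * q0 ^ (d-2)) := mul_lt_mul_of_pos_right hsq hpk
      _ ≤ q1 ^ 2 * (A ^ k * q1 ^ (d-2)) := by gcongr
      _ = A ^ k * (q1 ^ (d-2) * q1 ^ 2) := by ring

set_option maxHeartbeats 1600000 in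
lemma tie_key (m : ℕ) (hm : 2 ≤ m) :
    0 < ((m:ℝ) + 1) * ((q1*(1-q1)) ^ m - 3 * (q0*(1-q0)) ^ m)
      + 2 * (m:ℝ) * ((q1*(1-q1)) ^ (m-1) * q1 ^ 2 - 3 * ((q0*(1-q0)) ^ (m-1) * q0 ^ 2)) := by
  have hq0 : (0:ℝ) < q0 := by linarith
  have hb0 : (0:ℝ) < 1 - q0 := by linarith
  have hb1 : (0:ℝ) < 1 - q1 := by linarith
  set A := q1 * (1 - q1) with hA
  set B := q0 * (1 - q0) with hB
  have hApos : (0:ℝ) < A := by positivity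
  have hBpos : (0:ℝ) < B := by positivity
  have hAl : (0.19660:ℝ) < A := by
    calc (0.19660:ℝ) < 0.26894 * 0.73105 := by norm_num
      _ < q1 * (1 - q1) := by
          apply mul_lt_mul'' h1l (by linarith) (by norm_num) (by norm_num)
  have hAu : A < 0.19662 := by
    calc A < 0.26895 * 0.73106 := by
          apply mul_lt_mul'' h1u (by linarith) (by linarith) (by linarith)
      _ < 0.19662 := by norm_num
  have hBl : (0.11881:ℝ) < B := by
    calc (0.11881:ℝ) < 0.13781 * 0.86218 := by norm_num
      _ < q0 * (1 - q0) := by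
          apply mul_lt_mul'' h0l (by linarith) (by norm_num) (by norm_num)
  have hBu : B < 0.11883 := by
    calc B < 0.13782 * 0.86219 := by
          apply mul_lt_mul'' h0u (by linarith) (by linarith) (by linarith)
      _ < 0.11883 := by norm_num
  have hBA : B ≤ A := by linarith
  have hq12 : (0.072328:ℝ) < q1 ^ 2 := by
    have : (0.26894:ℝ) * 0.26894 < q1 * q1 :=
      mul_lt_mul'' h1l h1l (by norm_num) (by norm_num)
    nlinarith
  have hq02 : q0 ^ 2 < 0.018995 := by
    have : q0 * q0 < (0.13782:ℝ) * 0.13782 :=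
      mul_lt_mul'' h0u h0u (by linarith) (by linarith)
    nlinarith
  have hsq : 3 * q0 ^ 2 < q1 ^ 2 := by linarith
  have hA2 : (0.038651:ℝ) < A ^ 2 := by
    have : (0.19660:ℝ) * 0.19660 < A * A := mul_lt_mul'' hAl hAl (by norm_num) (by norm_num)
    nlinarith
  have hB2 : B ^ 2 < 0.014121 := by
    have : B * B < (0.11883:ℝ) * 0.11883 := mul_lt_mul'' hBu hBu (by linarith) (by linarith)
    nlinarith
  have hsecond : 3 * (B ^ (m-1) * q0 ^ 2) < A ^ (m-1) * q1 ^ 2 := by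
    have h1 : B ^ (m-1) ≤ A ^ (m-1) := by gcongr
    have h2 : (0:ℝ) < B ^ (m-1) := by positivity
    calc 3 * (B ^ (m-1) * q0 ^ 2) = (3 * q0 ^ 2) * B ^ (m-1) := by ring
      _ < q1 ^ 2 * B ^ (m-1) := mul_lt_mul_of_pos_right hsq h2
      _ ≤ q1 ^ 2 * A ^ (m-1) := by gcongr
      _ = A ^ (m-1) * q1 ^ 2 := by ring
  rcases Nat.lt_or_ge m 3 with hm3 | hm3
  · have hmeq : m = 2 := by omega
    subst hmeq
    have e1 : (0.0142196:ℝ) < A * q1 ^ 2 := by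
      calc (0.0142196:ℝ) < 0.19660 * 0.072328 := by norm_num
        _ < A * q1 ^ 2 := mul_lt_mul'' hAl hq12 (by norm_num) (by norm_num)
    have e2 : B * q0 ^ 2 < 0.0022572 := by
      calc B * q0 ^ 2 < 0.11883 * 0.018995 :=
            mul_lt_mul'' hBu hq02 (by linarith) (by positivity)
        _ < 0.0022572 := by norm_num
    norm_num
    linarith
  · have hfirst : 3 * B ^ m ≤ A ^ m := by
      have hA3 : (0.0075:ℝ) < A ^ 3 := by
        have h3 : A ^ 3 = A * A ^ 2 := by ring
        rw [h3]
        calc (0.0075:ℝ) < 0.19660 * 0.038651 := by norm_num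
          _ < A * A ^ 2 := mul_lt_mul'' hAl hA2 (by norm_num) (by norm_num)
      have hB3 : B ^ 3 < 0.0016781 := by
        have h3 : B ^ 3 = B * B ^ 2 := by ring
        rw [h3]
        calc B * B ^ 2 < 0.11883 * 0.014121 :=
              mul_lt_mul'' hBu hB2 (by linarith) (by positivity)
          _ < 0.0016781 := by norm_num
      have hcb : 3 * B ^ 3 ≤ A ^ 3 := by linarith
      have hmeq : m = (m - 3) + 3 := by omega
      rw [hmeq, pow_add, pow_add]
      calc 3 * (B ^ (m-3) * B ^ 3) = B ^ (m-3) * (3 * B ^ 3) := by ring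
        _ ≤ A ^ (m-3) * A ^ 3 := by
            apply mul_le_mul _ hcb (by positivity) (by positivity)
            gcongr
    have hmpos : (0:ℝ) < m := by exact_mod_cast (by omega : 0 < m)
    have h1 : (0:ℝ) ≤ ((m:ℝ)+1) * (A ^ m - 3 * B ^ m) := by
      apply mul_nonneg (by positivity); linarith
    have h2 : (0:ℝ) < 2 * (m:ℝ) * (A ^ (m-1) * q1 ^ 2 - 3 * (B ^ (m-1) * q0 ^ 2)) := by
      apply mul_pos (by positivity); linarith
    linarith

end ineqs

lemma U_repOf_zero (n : ℕ) (f : ℕ → ℝ) :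
    U n f (repOf n (1/4) 0 0) = (2 * f 0 - 1) * (-(1/2)) := by
  unfold U
  rw [Finset.sum_eq_single 0]
  · rw [jointProb_repOf_true, jointProb_repOf_false]
    norm_num
  · intro x hx hx0
    rw [jointProb_repOf_true, jointProb_repOf_false, zero_pow hx0]
    ring
  · intro h
    exact absurd (Finset.mem_range.mpr (Nat.succ_pos n)) h

lemma sSup_psiInf (n : ℕ) :
    sSup {t : ℝ | ∃ f : ℕ → ℝ, IsAggregator f ∧ t = U n f (rep n thetaStar psiInf)} = 1/2 := by
  have hrep : rep n thetaStar psiInf = repOf n (1/4) 0 0 := by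
    unfold rep
    rw [rpInf_false, rpInf_true]
    norm_num [thetaStar]
  apply IsGreatest.csSup_eq
  constructor
  · refine ⟨fun _ => 0, fun x => by norm_num, ?_⟩
    rw [hrep, U_repOf_zero]
    norm_num
  · rintro t ⟨f, hf, rfl⟩
    rw [hrep, U_repOf_zero]
    have := (hf 0).1
    nlinarith

lemma fmaj_nonneg (n x : ℕ) : 0 ≤ fmaj n x := by
  unfold fmaj
  split
  · norm_num
  · split <;> norm_num

set_option maxHeartbeats 3000000 in
lemma main_gt (n : ℕ) (hn : 2 < n) {q0 q1 : ℝ} (h0l : (0.13781:ℝ) < q0)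
    (h0u : q0 < 0.13782) (h1l : (0.26894:ℝ) < q1) (h1u : q1 < 0.26895) :
    1/2 < U n (fmaj n) (repOf n (1/4) q0 q1) := by
  set D : ℕ → ℝ := fun x => (1/4) * ((n.choose x : ℝ) * q1 ^ x * (1 - q1) ^ (n - x))
      - (3/4) * ((n.choose x : ℝ) * q0 ^ x * (1 - q0) ^ (n - x)) with hD
  have hU : U n (fmaj n) (repOf n (1/4) q0 q1)
      = ∑ x ∈ Finset.range (n+1), (2 * fmaj n x - 1) * D x := by
    unfold U
    refine Finset.sum_congr rfl fun x _ => ?_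
    rw [jointProb_repOf_true, jointProb_repOf_false, hD]
    norm_num
  have hDsum : ∑ x ∈ Finset.range (n+1), D x = -(1/2) := by
    rw [hD, Finset.sum_sub_distrib, ← Finset.mul_sum, ← Finset.mul_sum,
      binom_sum_one, binom_sum_one]
    norm_num
  have hsplit : ∑ x ∈ Finset.range (n+1), (2 * fmaj n x - 1) * D x
      = 2 * (∑ x ∈ Finset.range (n+1), fmaj n x * D x) - ∑ x ∈ Finset.range (n+1), D x := by
    rw [Finset.mul_sum, ← Finset.sum_sub_distrib]
    exact Finset.sum_congr rfl fun x _ => by ring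
  have hDpos : ∀ x : ℕ, x ≤ n → n < 2 * x → 0 < D x := by
    intro x h1 h2
    have hC : (0:ℝ) < (n.choose x : ℝ) := by exact_mod_cast Nat.choose_pos h1
    have ht := term_pos h0l h0u h1l h1u n x (by omega) h2 h1
    rw [hD]
    nlinarith [mul_pos hC (sub_pos.mpr ht)]
  have hterm_nonneg : ∀ x ∈ Finset.range (n+1), 2 * x ≠ n → 0 ≤ fmaj n x * D x := by
    intro x hx hne
    rcases lt_trichotomy (2*x) n with h | h | h
    · have : fmaj n x = 0 := by unfold fmaj; rw [if_pos h]
      rw [this, zero_mul]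
    · exact absurd h hne
    · have : fmaj n x = 1 := by unfold fmaj; rw [if_neg (by omega), if_neg (by omega)]
      rw [this, one_mul]
      exact le_of_lt (hDpos x (by have := Finset.mem_range.mp hx; omega) h)
  have hS : 0 < ∑ x ∈ Finset.range (n+1), fmaj n x * D x := by
    rcases Nat.even_or_odd n with he | ho
    · -- even case
      obtain ⟨m, hm⟩ := he
      have hm2 : 2 ≤ m := by omega
      have hmem1 : m + 1 ∈ Finset.range (n+1) := Finset.mem_range.mpr (by omega)
      rw [← Finset.add_sum_erase _ _ hmem1]
      have hmem2 : m ∈ (Finset.range (n+1)).erase (m+1) := by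
        rw [Finset.mem_erase]
        exact ⟨by omega, Finset.mem_range.mpr (by omega)⟩
      rw [← Finset.add_sum_erase _ _ hmem2]
      have hrest : 0 ≤ ∑ x ∈ ((Finset.range (n+1)).erase (m+1)).erase m, fmaj n x * D x := by
        apply Finset.sum_nonneg
        intro x hx
        rw [Finset.mem_erase, Finset.mem_erase] at hx
        exact hterm_nonneg x hx.2.2 (by omega)
      have f1 : fmaj n (m+1) = 1 := by
        unfold fmaj; rw [if_neg (by omega), if_neg (by omega)]
      have f2 : fmaj n m = 1/2 := by
        unfold fmaj; rw [if_neg (by omega), if_pos (by omega)]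
      have htie : 0 < D (m+1) + (1/2) * D m := by
        have hnm : n - m = m := by omega
        have hnm1 : n - (m+1) = m - 1 := by omega
        set C0 : ℝ := ((n.choose m : ℕ) : ℝ) with hC0
        set C1 : ℝ := ((n.choose (m+1) : ℕ) : ℝ) with hC1
        have hC0pos : (0:ℝ) < C0 := by
          rw [hC0]; exact_mod_cast Nat.choose_pos (by omega)
        have hCrel : C1 * ((m:ℝ) + 1) = C0 * (m:ℝ) := by
          have := Nat.choose_succ_right_eq n m
          have h2 : n - m = m := by omega
          rw [h2] at this
          rw [hC0, hC1]
          exact_mod_cast this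
        have hDm : D m = (1/4) * (C0 * (q1*(1-q1))^m) - (3/4) * (C0 * (q0*(1-q0))^m) := by
          rw [hD]
          simp only [hnm]
          rw [mul_pow, mul_pow]
          ring
        have hDm1 : D (m+1) = (1/4) * (C1 * ((q1*(1-q1))^(m-1) * q1^2))
            - (3/4) * (C1 * ((q0*(1-q0))^(m-1) * q0^2)) := by
          rw [hD]
          simp only [hnm1]
          have e1 : q1 ^ (m+1) = q1 ^ (m-1) * q1 ^ 2 := by
            rw [← pow_add]; congr 1; omega
          have e0 : q0 ^ (m+1) = q0 ^ (m-1) * q0 ^ 2 := by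
            rw [← pow_add]; congr 1; omega
          rw [e1, e0, mul_pow, mul_pow]
          ring
        have key := tie_key h0l h0u h1l h1u m hm2
        set A : ℝ := q1 * (1 - q1) with hA
        set B : ℝ := q0 * (1 - q0) with hB
        set P : ℝ := A ^ m - 3 * B ^ m with hP
        set Q : ℝ := A ^ (m-1) * q1 ^ 2 - 3 * (B ^ (m-1) * q0 ^ 2) with hQ
        have key' : 0 < ((m:ℝ) + 1) * P + 2 * (m:ℝ) * Q := key
        have hexpand : ((m:ℝ) + 1) * (8 * (D (m+1) + (1/2) * D m))
            = C0 * (((m:ℝ) + 1) * P + 2 * (m:ℝ) * Q) := by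
          rw [hDm, hDm1, hP, hQ]
          linear_combination (2 * Q) * hCrel
        have hpos8 : 0 < ((m:ℝ) + 1) * (8 * (D (m+1) + (1/2) * D m)) := by
          rw [hexpand]; exact mul_pos hC0pos key'
        have hm1 : (0:ℝ) < (m:ℝ) + 1 := by positivity
        nlinarith [hpos8, hm1]
      rw [f1, f2, one_mul]
      linarith
    · -- odd case
      obtain ⟨k, hk⟩ := ho
      apply Finset.sum_pos'
      · intro x hx
        apply hterm_nonneg x hx
        omega
      · refine ⟨n, Finset.mem_range.mpr (by omega), ?_⟩
        have : fmaj n n = 1 := by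
          unfold fmaj; rw [if_neg (by omega), if_neg (by omega)]
        rw [this, one_mul]
        exact hDpos n le_rfl (by omega)
  rw [hU, hsplit, hDsum]
  linarith

/-- **Majority voting on bounded-rational reports beats the best aggregation of fully
rational reports.** With `θ*` as above and `λ* = 5/2`, each expert's bounded-rational
report is `1` with probability `q_0 = 1/(2+2e^5) + 1/(2+2e)` when `ω = 0` and
`q_1 = 1/(1+e)` when `ω = 1`; and for every `n > 2` the best aggregation of the fully
rational reports attains utility exactly `1/2`, which majority voting on the
bounded-rational reports strictly beats. -/
theorem majority_beats_perfect_rationality :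
    reportProb thetaStar (psi (5 / 2)) false =
        1 / (2 + 2 * Real.exp 5) + 1 / (2 + 2 * Real.exp 1) ∧
    reportProb thetaStar (psi (5 / 2)) true = 1 / (1 + Real.exp 1) ∧
    ∀ n : ℕ, 2 < n →
      sSup {t : ℝ | ∃ f : ℕ → ℝ, IsAggregator f ∧ t = U n f (rep n thetaStar psiInf)} = 1 / 2 ∧
        U n (fmaj n) (rep n thetaStar (psi (5 / 2))) >
          sSup {t : ℝ | ∃ f : ℕ → ℝ, IsAggregator f ∧ t = U n f (rep n thetaStar psiInf)} := by
  obtain ⟨hb1, hb2, hb3, hb4⟩ := q_bounds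
  refine ⟨rp_false, rp_true, fun n hn => ⟨sSup_psiInf n, ?_⟩⟩
  rw [sSup_psiInf n]
  have hrep : rep n thetaStar (psi (5/2)) =
      repOf n (1/4) (1 / (2 + 2 * Real.exp 5) + 1 / (2 + 2 * Real.exp 1)) (1 / (1 + Real.exp 1)) := by
    unfold rep
    rw [rp_false, rp_true]
    norm_num [thetaStar]
  rw [hrep]
  exact main_gt n hn hb1 hb2 hb3 hb4
end

section
/- Unique coplanar interpolation point: fix λ > 0 and let v(s) = (s, ψ_λ(s), s·ψ_λ(s)). For all 0 < p_1 < p_2 < 1 and every q ∈ [0,1], there exists a unique p ∈ (0,1) such that the four points q·v(p_1) + (1−q)·v(p_2), v(p), v(0), v(1) lie in a common plane of ℝ³, and this p satisfies p ∈ [p_1, p_2]. -/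
open Real

/-- The curve point `v(s) = (s, ψ_λ(s), s·ψ_λ(s)) ∈ ℝ³`. -/
noncomputable def vpoint (lam s : ℝ) : ℝ × ℝ × ℝ := (s, psi lam s, s * psi lam s)

/-! ### Auxiliary definitions -/

noncomputable def WW1 (p1 p2 q : ℝ) : ℝ := q * p1 + (1 - q) * p2
noncomputable def WW2 (lam p1 p2 q : ℝ) : ℝ := q * psi lam p1 + (1 - q) * psi lam p2
noncomputable def WW3 (lam p1 p2 q : ℝ) : ℝ :=
  q * (p1 * psi lam p1) + (1 - q) * (p2 * psi lam p2)

noncomputable def NN1 (lam p1 p2 q : ℝ) : ℝ :=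
  (psi lam 1 - psi lam 0) * WW3 lam p1 p2 q - psi lam 1 * (WW2 lam p1 p2 q - psi lam 0)
noncomputable def NN2 (lam p1 p2 q : ℝ) : ℝ :=
  psi lam 1 * WW1 p1 p2 q - WW3 lam p1 p2 q
noncomputable def NN3 (lam p1 p2 q : ℝ) : ℝ :=
  (WW2 lam p1 p2 q - psi lam 0) - (psi lam 1 - psi lam 0) * WW1 p1 p2 q

noncomputable def hfun (lam p1 p2 q p : ℝ) : ℝ :=
  NN1 lam p1 p2 q * p + NN2 lam p1 p2 q * (psi lam p - psi lam 0)
    + NN3 lam p1 p2 q * (p * psi lam p)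

/-! ### Basic facts about `psi` -/

lemma psi_pos (lam s : ℝ) : 0 < psi lam s := by
  unfold psi
  positivity

lemma psi_lt_psi (lam : ℝ) (hlam : 0 < lam) {s t : ℝ} (hst : s < t) :
    psi lam s < psi lam t := by
  unfold psi
  have hE : Real.exp (2 * lam * (1 - 2 * t)) < Real.exp (2 * lam * (1 - 2 * s)) := by
    apply Real.exp_lt_exp.mpr
    nlinarith
  have h1 : 0 < 1 + Real.exp (2 * lam * (1 - 2 * t)) := by positivity
  apply one_div_lt_one_div_of_lt h1
  linarith

lemma continuous_psi (lam : ℝ) : Continuous (psi lam) := by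
  unfold psi
  apply Continuous.div continuous_const
  · apply Continuous.add continuous_const
    exact Real.continuous_exp.comp (by continuity)
  · intro x
    positivity

lemma psi_mul (lam s : ℝ) : psi lam s * (1 + Real.exp (2 * lam * (1 - 2 * s))) = 1 := by
  unfold psi
  have h1 : 0 < 1 + Real.exp (2 * lam * (1 - 2 * s)) := by positivity
  field_simp

/-! ### Rolle-based zero counting -/

lemma four_zeros_degenerate (lam n1 m n2 n3 : ℝ) (hlam : 0 < lam)
    (r1 r2 : ℝ) (h0 : 0 < r1) (h12 : r1 < r2) (h21 : r2 < 1)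
    (hz0 : (n1*0 + m)*(1+Real.exp (2*lam*(1-2*0))) + (n2 + n3*0) = 0)
    (hzr1 : (n1*r1 + m)*(1+Real.exp (2*lam*(1-2*r1))) + (n2 + n3*r1) = 0)
    (hzr2 : (n1*r2 + m)*(1+Real.exp (2*lam*(1-2*r2))) + (n2 + n3*r2) = 0)
    (hz1 : (n1*1 + m)*(1+Real.exp (2*lam*(1-2*1))) + (n2 + n3*1) = 0) :
    n1 = 0 ∧ m = 0 := by
  set H : ℝ → ℝ := fun s => (n1*s + m)*(1+Real.exp (2*lam*(1-2*s))) + (n2 + n3*s) with hHdef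
  set H1 : ℝ → ℝ := fun s => (n1 - 4*lam*(n1*s+m)) * Real.exp (2*lam*(1-2*s)) + (n1 + n3)
    with hH1def
  set H2 : ℝ → ℝ := fun s => (16*lam^2*(n1*s+m) - 8*lam*n1) * Real.exp (2*lam*(1-2*s))
    with hH2def
  have hg : ∀ s : ℝ, HasDerivAt (fun x : ℝ => 2*lam*(1-2*x)) (-(4*lam)) s := by
    intro s
    have h1 : HasDerivAt (fun x : ℝ => 1 - 2*x) (-2 : ℝ) s := by
      simpa using ((hasDerivAt_id s).const_mul (2:ℝ)).const_sub 1
    have := h1.const_mul (2*lam)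
    exact this.congr_deriv (by ring)
  have hE : ∀ s : ℝ, HasDerivAt (fun x : ℝ => Real.exp (2*lam*(1-2*x)))
      (Real.exp (2*lam*(1-2*s)) * (-(4*lam))) s := fun s => (hg s).exp
  have hH' : ∀ s : ℝ, HasDerivAt H (H1 s) s := by
    intro s
    have hf : HasDerivAt (fun x : ℝ => n1*x + m) n1 s := by
      simpa using ((hasDerivAt_id s).const_mul n1).add_const m
    have hgg : HasDerivAt (fun x : ℝ => 1 + Real.exp (2*lam*(1-2*x)))
        (Real.exp (2*lam*(1-2*s)) * (-(4*lam))) s := (hE s).const_add 1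
    have hlin : HasDerivAt (fun x : ℝ => n2 + n3*x) n3 s := by
      simpa using ((hasDerivAt_id s).const_mul n3).const_add n2
    have := (hf.mul hgg).add hlin
    exact this.congr_deriv (by ring)
  have hH1' : ∀ s : ℝ, HasDerivAt H1 (H2 s) s := by
    intro s
    have hf : HasDerivAt (fun x : ℝ => n1 - 4*lam*(n1*x+m)) (-(4*lam*n1)) s := by
      have h1 : HasDerivAt (fun x : ℝ => n1*x + m) n1 s := by
        simpa using ((hasDerivAt_id s).const_mul n1).add_const m
      exact (h1.const_mul (4*lam)).const_sub n1
    have := (hf.mul (hE s)).add_const (n1 + n3)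
    exact this.congr_deriv (by ring)
  have hcont : ∀ a b : ℝ, ContinuousOn H (Set.Icc a b) :=
    fun a b => fun x _ => (hH' x).continuousAt.continuousWithinAt
  have hcont1 : ∀ a b : ℝ, ContinuousOn H1 (Set.Icc a b) :=
    fun a b => fun x _ => (hH1' x).continuousAt.continuousWithinAt
  have hH0 : H 0 = 0 := hz0
  have hHr1 : H r1 = 0 := hzr1
  have hHr2 : H r2 = 0 := hzr2
  have hHone : H 1 = 0 := hz1
  obtain ⟨s1, hs1, hs1z⟩ := exists_hasDerivAt_eq_zero h0 (hcont 0 r1) (hH0.trans hHr1.symm)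
    (fun x _ => hH' x)
  obtain ⟨s2, hs2, hs2z⟩ := exists_hasDerivAt_eq_zero h12 (hcont r1 r2) (hHr1.trans hHr2.symm)
    (fun x _ => hH' x)
  obtain ⟨s3, hs3, hs3z⟩ := exists_hasDerivAt_eq_zero h21 (hcont r2 1) (hHr2.trans hHone.symm)
    (fun x _ => hH' x)
  have h12' : s1 < s2 := lt_trans hs1.2 hs2.1
  have h23' : s2 < s3 := lt_trans hs2.2 hs3.1
  obtain ⟨t1, ht1, ht1z⟩ := exists_hasDerivAt_eq_zero h12' (hcont1 s1 s2) (hs1z.trans hs2z.symm)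
    (fun x _ => hH1' x)
  obtain ⟨t2, ht2, ht2z⟩ := exists_hasDerivAt_eq_zero h23' (hcont1 s2 s3) (hs2z.trans hs3z.symm)
    (fun x _ => hH1' x)
  have htne : t1 ≠ t2 := ne_of_lt (lt_trans ht1.2 ht2.1)
  have he1 : 16*lam^2*(n1*t1+m) - 8*lam*n1 = 0 := by
    have hpos := Real.exp_pos (2*lam*(1-2*t1))
    have := ht1z
    rw [hH2def] at this
    exact (mul_eq_zero.mp this).resolve_right (ne_of_gt hpos)
  have he2 : 16*lam^2*(n1*t2+m) - 8*lam*n1 = 0 := by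
    have hpos := Real.exp_pos (2*lam*(1-2*t2))
    have := ht2z
    rw [hH2def] at this
    exact (mul_eq_zero.mp this).resolve_right (ne_of_gt hpos)
  have hn1 : n1 = 0 := by
    have hd : 16*lam^2*n1*(t1 - t2) = 0 := by linear_combination he1 - he2
    have hlam2 : (16:ℝ)*lam^2 ≠ 0 := by positivity
    rcases mul_eq_zero.mp hd with h | h
    · rcases mul_eq_zero.mp h with h' | h'
      · exact absurd h' hlam2
      · exact h'
    · exact absurd (sub_eq_zero.mp h) htne
  refine ⟨hn1, ?_⟩
  have hm : 16*lam^2*m = 0 := by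
    rw [hn1] at he1
    linarith [he1]
  have hlam2 : (16:ℝ)*lam^2 ≠ 0 := by positivity
  rcases mul_eq_zero.mp hm with h | h
  · exact absurd h hlam2
  · exact h

/-! ### Structural facts about `hfun` -/

lemma hfun_zero (lam p1 p2 q : ℝ) : hfun lam p1 p2 q 0 = 0 := by
  simp only [hfun, NN1, NN2, NN3, WW1, WW2, WW3]
  ring

lemma hfun_one (lam p1 p2 q : ℝ) : hfun lam p1 p2 q 1 = 0 := by
  simp only [hfun, NN1, NN2, NN3, WW1, WW2, WW3]
  ring

lemma hfun_comb (lam p1 p2 q : ℝ) :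
    q * hfun lam p1 p2 q p1 + (1 - q) * hfun lam p1 p2 q p2 = 0 := by
  simp only [hfun, NN1, NN2, NN3, WW1, WW2, WW3]
  ring

lemma hfun_continuous (lam p1 p2 q : ℝ) : Continuous (hfun lam p1 p2 q) := by
  unfold hfun
  apply Continuous.add
  apply Continuous.add
  · exact continuous_const.mul continuous_id
  · exact continuous_const.mul ((continuous_psi lam).sub continuous_const)
  · exact continuous_const.mul (continuous_id.mul (continuous_psi lam))

lemma NN2_pos (lam p1 p2 q : ℝ) (hlam : 0 < lam) (hp1 : 0 < p1) (hp12 : p1 < p2)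
    (hp2 : p2 < 1) (hq0 : 0 ≤ q) (hq1 : q ≤ 1) : 0 < NN2 lam p1 p2 q := by
  have hp2pos : 0 < p2 := lt_trans hp1 hp12
  have hp1lt1 : p1 < 1 := lt_trans hp12 hp2
  have hb1 : psi lam p1 < psi lam 1 := psi_lt_psi lam hlam hp1lt1
  have hb2 : psi lam p2 < psi lam 1 := psi_lt_psi lam hlam hp2
  simp only [NN2, WW1, WW3]
  rcases eq_or_lt_of_le hq1 with hq1' | hq1'
  · subst hq1'
    nlinarith [mul_pos hp1 (sub_pos.mpr hb1)]
  · nlinarith [mul_nonneg (mul_nonneg hq0 hp1.le) (sub_pos.mpr hb1).le,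
      mul_pos (mul_pos (sub_pos.mpr hq1') hp2pos) (sub_pos.mpr hb2)]

lemma hfun_Hform (lam p1 p2 q : ℝ) (s : ℝ) (hs : hfun lam p1 p2 q s = 0) :
    (NN1 lam p1 p2 q * s + (-(NN2 lam p1 p2 q * psi lam 0))) *
        (1 + Real.exp (2*lam*(1-2*s))) + (NN2 lam p1 p2 q + NN3 lam p1 p2 q * s) = 0 := by
  have hψ := psi_mul lam s
  have hs' : NN1 lam p1 p2 q * s + NN2 lam p1 p2 q * (psi lam s - psi lam 0)
      + NN3 lam p1 p2 q * (s * psi lam s) = 0 := hs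
  linear_combination (1 + Real.exp (2*lam*(1-2*s))) * hs'
    - (NN2 lam p1 p2 q + NN3 lam p1 p2 q * s) * hψ

lemma hfun_root_unique (lam p1 p2 q : ℝ) (hlam : 0 < lam) (hp1 : 0 < p1) (hp12 : p1 < p2)
    (hp2 : p2 < 1) (hq0 : 0 ≤ q) (hq1 : q ≤ 1) :
    ∀ r1 ∈ Set.Ioo (0:ℝ) 1, ∀ r2 ∈ Set.Ioo (0:ℝ) 1,
      hfun lam p1 p2 q r1 = 0 → hfun lam p1 p2 q r2 = 0 → r1 = r2 := by
  have hn2 := NN2_pos lam p1 p2 q hlam hp1 hp12 hp2 hq0 hq1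
  have ha := psi_pos lam 0
  have key : ∀ r1 r2 : ℝ, 0 < r1 → r1 < r2 → r2 < 1 →
      hfun lam p1 p2 q r1 = 0 → hfun lam p1 p2 q r2 = 0 → False := by
    intro r1 r2 h0 h12 h21 hz1 hz2
    obtain ⟨-, hm⟩ := four_zeros_degenerate lam (NN1 lam p1 p2 q)
      (-(NN2 lam p1 p2 q * psi lam 0)) (NN2 lam p1 p2 q) (NN3 lam p1 p2 q) hlam r1 r2 h0 h12 h21
      (hfun_Hform lam p1 p2 q 0 (hfun_zero lam p1 p2 q))
      (hfun_Hform lam p1 p2 q r1 hz1)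
      (hfun_Hform lam p1 p2 q r2 hz2)
      (hfun_Hform lam p1 p2 q 1 (hfun_one lam p1 p2 q))
    nlinarith [mul_pos hn2 ha]
  intro r1 hr1 r2 hr2 hz1 hz2
  rcases lt_trichotomy r1 r2 with h | h | h
  · exact (key r1 r2 hr1.1 h hr2.2 hz1 hz2).elim
  · exact h
  · exact (key r2 r1 hr2.1 h hr1.2 hz2 hz1).elim

/-! ### Affine independence bridging -/

lemma not_affineIndependent_of_comb (P : Fin 4 → ℝ × ℝ × ℝ) (c : Fin 4 → ℝ)
    (hsum : c 0 + c 1 + c 2 + c 3 = 0)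
    (hcomb : c 0 • P 0 + c 1 • P 1 + c 2 • P 2 + c 3 • P 3 = 0)
    (hne : c 1 ≠ 0) : ¬ AffineIndependent ℝ P := by
  intro hAI
  exact hne (affineIndependent_iff.mp hAI Finset.univ c
    (by rw [Fin.sum_univ_four]; exact hsum)
    (by rw [Fin.sum_univ_four]; exact hcomb) 1 (Finset.mem_univ 1))

lemma comb_of_not_affineIndependent (P : Fin 4 → ℝ × ℝ × ℝ)
    (h : ¬ AffineIndependent ℝ P) :
    ∃ c : Fin 4 → ℝ, c 0 + c 1 + c 2 + c 3 = 0 ∧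
      c 0 • P 0 + c 1 • P 1 + c 2 • P 2 + c 3 • P 3 = 0 ∧
      (c 0 ≠ 0 ∨ c 1 ≠ 0 ∨ c 2 ≠ 0 ∨ c 3 ≠ 0) := by
  rw [affineIndependent_iff] at h
  push_neg at h
  obtain ⟨s, w, hsum, hcomb, i, his, hwi⟩ := h
  refine ⟨fun j => if j ∈ s then w j else 0, ?_, ?_, ?_⟩
  · have : ∑ j ∈ Finset.univ, (if j ∈ s then w j else 0) = 0 := by
      rw [Finset.sum_ite_mem, Finset.univ_inter]
      exact hsum
    rw [Fin.sum_univ_four] at this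
    exact this
  · have heq : ∀ j, (if j ∈ s then w j else 0) • P j = (if j ∈ s then w j • P j else 0) := by
      intro j
      split <;> simp
    have : ∑ j ∈ Finset.univ, (if j ∈ s then w j else 0) • P j = 0 := by
      rw [Finset.sum_congr rfl (fun j _ => heq j), Finset.sum_ite_mem, Finset.univ_inter]
      exact hcomb
    rw [Fin.sum_univ_four] at this
    exact this
  · fin_cases i
    · exact Or.inl (by simpa [show (0 : Fin 4) ∈ s from his] using hwi)
    · exact Or.inr (Or.inl (by simpa [show (1 : Fin 4) ∈ s from his] using hwi))
    · exact Or.inr (Or.inr (Or.inl (by simpa [show (2 : Fin 4) ∈ s from his] using hwi)))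
    · exact Or.inr (Or.inr (Or.inr (by simpa [show (3 : Fin 4) ∈ s from his] using hwi)))

lemma root_dep (lam p1 p2 q p : ℝ) (hn2 : NN2 lam p1 p2 q ≠ 0)
    (hz : hfun lam p1 p2 q p = 0) :
    ¬ AffineIndependent ℝ
      ![q • vpoint lam p1 + (1 - q) • vpoint lam p2, vpoint lam p,
        vpoint lam 0, vpoint lam 1] := by
  have hzE : NN1 lam p1 p2 q * p + NN2 lam p1 p2 q * (psi lam p - psi lam 0)
      + NN3 lam p1 p2 q * (p * psi lam p) = 0 := hz
  simp only [NN1, NN2, NN3, WW1, WW2, WW3] at hzE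
  set c0 : ℝ := psi lam 1 * p - p * psi lam p with hc0
  set c3 : ℝ := NN2 lam p1 p2 q * p + (p * psi lam p - psi lam 1 * p) * WW1 p1 p2 q with hc3
  set c2 : ℝ := NN2 lam p1 p2 q - c0 - c3 with hc2
  apply not_affineIndependent_of_comb _ ![c0, -(NN2 lam p1 p2 q), c2, c3]
  · show c0 + -(NN2 lam p1 p2 q) + c2 + c3 = 0
    rw [hc2]; ring
  · show c0 • (q • vpoint lam p1 + (1 - q) • vpoint lam p2) + (-(NN2 lam p1 p2 q)) • vpoint lam p
      + c2 • vpoint lam 0 + c3 • vpoint lam 1 = 0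
    rw [hc2, hc3, hc0]
    simp only [vpoint, NN2, NN3, NN1, WW1, WW2, WW3, Prod.smul_mk, Prod.mk_add_mk,
      smul_eq_mul, Prod.mk_eq_zero]
    refine ⟨?_, ?_, ?_⟩
    · ring
    · linear_combination -hzE
    · ring
  · show -(NN2 lam p1 p2 q) ≠ 0
    simpa using hn2

lemma dep_root (lam p1 p2 q p' : ℝ) (hn2 : NN2 lam p1 p2 q ≠ 0)
    (hAI : ¬ AffineIndependent ℝ
      ![q • vpoint lam p1 + (1 - q) • vpoint lam p2, vpoint lam p',
        vpoint lam 0, vpoint lam 1]) :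
    hfun lam p1 p2 q p' = 0 := by
  obtain ⟨c, hsum, hcomb, hne⟩ := comb_of_not_affineIndependent _ hAI
  simp only [Matrix.cons_val_zero, Matrix.cons_val_one, Matrix.head_cons,
    Matrix.cons_val_two, Matrix.tail_cons, Matrix.cons_val_three] at hcomb
  simp only [vpoint, Prod.smul_mk, Prod.mk_add_mk, smul_eq_mul, Prod.mk_eq_zero] at hcomb
  obtain ⟨e1, e2, e3⟩ := hcomb
  have hn2' : psi lam 1 * (q * p1 + (1 - q) * p2)
      - (q * (p1 * psi lam p1) + (1 - q) * (p2 * psi lam p2)) ≠ 0 := by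
    simpa [NN2, WW1, WW3] using hn2
  rcases eq_or_ne (c 1) 0 with h1 | h1
  · exfalso
    have hc0m : c 0 * (psi lam 1 * (q * p1 + (1 - q) * p2)
        - (q * (p1 * psi lam p1) + (1 - q) * (p2 * psi lam p2))) = 0 := by
      linear_combination (psi lam 1) * e1 - e3 - (psi lam 1 * p' - p' * psi lam p') * h1
    have hc00 : c 0 = 0 := (mul_eq_zero.mp hc0m).resolve_right hn2'
    have hc3 : c 3 = 0 := by
      linear_combination e1 - (q * p1 + (1 - q) * p2) * hc00 - p' * h1
    have hc2 : c 2 = 0 := by linear_combination hsum - hc00 - h1 - hc3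
    rcases hne with h | h | h | h
    · exact h hc00
    · exact h h1
    · exact h hc2
    · exact h hc3
  · have hkey : c 1 * hfun lam p1 p2 q p' = 0 := by
      simp only [hfun, NN1, NN2, NN3, WW1, WW2, WW3]
      linear_combination
        ((psi lam 1 - psi lam 0) * (q * (p1 * psi lam p1) + (1 - q) * (p2 * psi lam p2))
          - psi lam 1 * ((q * psi lam p1 + (1 - q) * psi lam p2) - psi lam 0)) * e1
        + (psi lam 1 * (q * p1 + (1 - q) * p2)
          - (q * (p1 * psi lam p1) + (1 - q) * (p2 * psi lam p2))) * e2
        + (((q * psi lam p1 + (1 - q) * psi lam p2) - psi lam 0)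
          - (psi lam 1 - psi lam 0) * (q * p1 + (1 - q) * p2)) * e3
        - ((psi lam 1 * (q * p1 + (1 - q) * p2)
          - (q * (p1 * psi lam p1) + (1 - q) * (p2 * psi lam p2))) * psi lam 0) * hsum
    exact (mul_eq_zero.mp hkey).resolve_left h1

/-- **Unique coplanar interpolation point.** Fix `λ > 0`. For all `0 < p₁ < p₂ < 1` and
every `q ∈ [0,1]`, there exists a unique `p ∈ (0,1)` such that the four points
`q·v(p₁) + (1−q)·v(p₂), v(p), v(0), v(1)` are coplanar (affinely dependent), and this
`p` lies in `[p₁, p₂]`. -/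
theorem unique_coplanar_interpolation_point (lam : ℝ) (hlam : 0 < lam)
    (p1 p2 : ℝ) (hp1 : 0 < p1) (hp12 : p1 < p2) (hp2 : p2 < 1)
    (q : ℝ) (hq : q ∈ Set.Icc (0 : ℝ) 1) :
    ∃ p : ℝ,
      (p ∈ Set.Ioo (0 : ℝ) 1 ∧
        ¬ AffineIndependent ℝ
          ![q • vpoint lam p1 + (1 - q) • vpoint lam p2, vpoint lam p,
            vpoint lam 0, vpoint lam 1] ∧
        p ∈ Set.Icc p1 p2) ∧
      ∀ p' : ℝ, p' ∈ Set.Ioo (0 : ℝ) 1 →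
        ¬ AffineIndependent ℝ
          ![q • vpoint lam p1 + (1 - q) • vpoint lam p2, vpoint lam p',
            vpoint lam 0, vpoint lam 1] →
        p' = p := by
  obtain ⟨hq0, hq1⟩ := hq
  have hn2 := NN2_pos lam p1 p2 q hlam hp1 hp12 hp2 hq0 hq1
  have hn2' : NN2 lam p1 p2 q ≠ 0 := ne_of_gt hn2
  have hqh := hfun_comb (p1 := p1) (p2 := p2) (q := q) (lam := lam)
  have hcont := hfun_continuous lam p1 p2 q
  have hroot : ∃ p ∈ Set.Icc p1 p2, hfun lam p1 p2 q p = 0 := by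
    rcases eq_or_ne (hfun lam p1 p2 q p1) 0 with h1 | h1
    · exact ⟨p1, ⟨le_refl p1, hp12.le⟩, h1⟩
    rcases eq_or_ne (hfun lam p1 p2 q p2) 0 with h2 | h2
    · exact ⟨p2, ⟨hp12.le, le_refl p2⟩, h2⟩
    have hqpos : 0 < q := by
      rcases eq_or_lt_of_le hq0 with h | h
      · exact absurd (show hfun lam p1 p2 q p2 = 0 by
          linear_combination hqh + (hfun lam p1 p2 q p1 - hfun lam p1 p2 q p2) * h) h2
      · exact h
    have hq1pos : q < 1 := by
      rcases eq_or_lt_of_le hq1 with h | h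
      · exact absurd (show hfun lam p1 p2 q p1 = 0 by
          linear_combination hqh + (hfun lam p1 p2 q p2 - hfun lam p1 p2 q p1) * h) h1
      · exact h
    rcases lt_or_gt_of_ne h1 with hneg | hpos
    · have hpos2 : 0 < hfun lam p1 p2 q p2 := by nlinarith
      obtain ⟨p, hpmem, hp0⟩ := intermediate_value_Icc hp12.le hcont.continuousOn
        ⟨hneg.le, hpos2.le⟩
      exact ⟨p, hpmem, hp0⟩
    · have hneg2 : hfun lam p1 p2 q p2 < 0 := by nlinarith
      obtain ⟨p, hpmem, hp0⟩ := intermediate_value_Icc' hp12.le hcont.continuousOn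
        ⟨hneg2.le, hpos.le⟩
      exact ⟨p, hpmem, hp0⟩
  obtain ⟨p, hpmem, hproot⟩ := hroot
  have hpIoo : p ∈ Set.Ioo (0:ℝ) 1 :=
    ⟨lt_of_lt_of_le hp1 hpmem.1, lt_of_le_of_lt hpmem.2 hp2⟩
  refine ⟨p, ⟨hpIoo, root_dep lam p1 p2 q p hn2' hproot, hpmem⟩, ?_⟩
  intro p' hp' hAI'
  exact hfun_root_unique lam p1 p2 q hlam hp1 hp12 hp2 hq0 hq1 p' hp' p hpIoo
    (dep_root lam p1 p2 q p' hn2' hAI') hproot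
end
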